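/- For every player i, every level k ∈ ℕ₀ and every round n ∈ ℕ₀, the survivor set Σⁿ_{θ_{ik}} of the Δ^κ-rationalization procedure is nonempty. -/

import Mathlib

open scoped BigOperators
open Classical

noncomputable section

/-- A belief of a player: a probability distribution over
(opponent level-type, opponent action) pairs. -/
structure Belief (B : Type*) where
  p : ℕ × B → ℝ
  nonneg : ∀ x, 0 ≤ p x
  hasSum_one : HasSum p 1

/-- Marginal probability assigned to the opponent's level-`t` type. -/
def Belief.marg {B : Type*} [Fintype B] (μ : Belief B) (t : ℕ) : ℝ := ∑ b : B, μ.p (t, b)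

/-- Probability assigned by a belief to a set of (level, action) pairs. -/
def Belief.probOn {B : Type*} (μ : Belief B) (S : Set (ℕ × B)) : ℝ := ∑' x, S.indicator μ.p x

/-- `f` normalized to the levels `0, …, k-1` (denoted `f^k` in the paper). -/
def fnorm (f : ℕ → ℝ) (k t : ℕ) : ℝ := f t / ∑ ℓ ∈ Finset.range k, f ℓ

/-- Membership in `Δ^{θ_{ik}}`: conditions K1–K3 for `k ≥ 1`; no restriction for `k = 0`. -/
def memDelta {B : Type*} [Fintype B] (f : ℕ → ℝ) (k : ℕ) (μ : Belief B) : Prop :=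
  k ≠ 0 →
    ((∀ t, k ≤ t → μ.marg t = 0) ∧
     (0 < μ.marg 0 → ∀ b : B, μ.p (0, b) / μ.marg 0 = 1 / (Fintype.card B : ℝ)) ∧
     (∀ t, t < k → μ.marg t = fnorm f k t))

/-- Expected payoff of own action `a` for the own level-`k` type given belief `μ`:
the level-0 type's payoff is constant `0`, all other types get `v`. -/
def expPay {A B : Type*} (v : A → B → ℝ) (k : ℕ) (μ : Belief B) (a : A) : ℝ :=
  ∑' x : ℕ × B, μ.p x * (if k = 0 then 0 else v a x.2)

/-- `a` is a best response to belief `μ` under the own level-`k` type. -/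
def isBR {A B : Type*} (v : A → B → ℝ) (k : ℕ) (μ : Belief B) (a : A) : Prop :=
  ∀ a' : A, expPay v k μ a' ≤ expPay v k μ a

/-- The Δ^κ-rationalization procedure; component 1 is player 1's set of surviving
(level, action) pairs, component 2 is player 2's. -/
def SigmaProc {A B : Type*} [Fintype A] [Fintype B]
    (v1 : A → B → ℝ) (v2 : B → A → ℝ) (f : ℕ → ℝ) :
    ℕ → Set (ℕ × A) × Set (ℕ × B)
  | 0 => (Set.univ, Set.univ)
  | n + 1 =>
      let P := SigmaProc v1 v2 f n
      ({x | x ∈ P.1 ∧ ∃ μ : Belief B, memDelta f x.1 μ ∧ μ.probOn P.2 = 1 ∧ isBR v1 x.1 μ x.2},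
       {y | y ∈ P.2 ∧ ∃ μ : Belief A, memDelta f y.1 μ ∧ μ.probOn P.1 = 1 ∧ isBR v2 y.1 μ y.2})

/-- The section `Σⁿ_{θ_{1k}}` of player 1 (as a set of actions). -/
def SigmaSec1 {A B : Type*} [Fintype A] [Fintype B]
    (v1 : A → B → ℝ) (v2 : B → A → ℝ) (f : ℕ → ℝ) (n k : ℕ) : Set A :=
  {a | (k, a) ∈ (SigmaProc v1 v2 f n).1}

/-- The section `Σⁿ_{θ_{2k}}` of player 2 (as a set of actions). -/
def SigmaSec2 {A B : Type*} [Fintype A] [Fintype B]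
    (v1 : A → B → ℝ) (v2 : B → A → ℝ) (f : ℕ → ℝ) (n k : ℕ) : Set B :=
  {b | (k, b) ∈ (SigmaProc v1 v2 f n).2}

/-- The CH-procedure requirement on beliefs at step `n+1`, given the previous
sections `Ψⁿ` of the opponent: the support of `μ` equals `∪_{t=0}^{n} Ψⁿ_{θ_{-i,t}}`
and `μ` is conditionally uniform over each `Ψⁿ_{θ_{-i,t}}`. -/
def CHBelief {B : Type*} (Ψ : ℕ → Set B) (n : ℕ) (μ : Belief B) : Prop :=
  (∀ x : ℕ × B, μ.p x ≠ 0 ↔ x.1 ≤ n ∧ x.2 ∈ Ψ x.1) ∧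
  (∀ t, t ≤ n → ∀ b b' : B, b ∈ Ψ t → b' ∈ Ψ t → μ.p (t, b) = μ.p (t, b'))

/-- The CH-procedure: step `n` returns, for each player and each level `k`,
the set of actions in `Ψⁿ_{θ_{ik}}`. -/
def CHProc {A B : Type*} [Fintype A] [Fintype B]
    (v1 : A → B → ℝ) (v2 : B → A → ℝ) (f : ℕ → ℝ) :
    ℕ → (ℕ → Set A) × (ℕ → Set B)
  | 0 => (fun _ => Set.univ, fun _ => Set.univ)
  | n + 1 =>
      let P := CHProc v1 v2 f n
      (fun k =>
        if k = n + 1 then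
          {a | ∃ μ : Belief B, memDelta f (n + 1) μ ∧ CHBelief P.2 n μ ∧ isBR v1 (n + 1) μ a}
        else P.1 k,
       fun k =>
        if k = n + 1 then
          {b | ∃ μ : Belief A, memDelta f (n + 1) μ ∧ CHBelief P.1 n μ ∧ isBR v2 (n + 1) μ b}
        else P.2 k)

/-- `Ψⁿ_{θ_{1k}}` for player 1 (as a set of actions). -/
def CHSec1 {A B : Type*} [Fintype A] [Fintype B]
    (v1 : A → B → ℝ) (v2 : B → A → ℝ) (f : ℕ → ℝ) (n k : ℕ) : Set A :=
  (CHProc v1 v2 f n).1 k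

/-- `Ψⁿ_{θ_{2k}}` for player 2 (as a set of actions). -/
def CHSec2 {A B : Type*} [Fintype A] [Fintype B]
    (v1 : A → B → ℝ) (v2 : B → A → ℝ) (f : ℕ → ℝ) (n k : ℕ) : Set B :=
  (CHProc v1 v2 f n).2 k

end

noncomputable section MyAux

namespace SigmaNonemptyAux

variable {A B : Type*} [Fintype A] [Fintype B]

lemma probOn_eq_one_of_support {μ : Belief B} {S : Set (ℕ × B)}
    (h : ∀ x, μ.p x ≠ 0 → x ∈ S) : μ.probOn S = 1 := by
  have he : S.indicator μ.p = μ.p := by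
    funext x
    by_cases hx : x ∈ S
    · exact Set.indicator_of_mem hx _
    · rw [Set.indicator_of_notMem hx]
      by_contra hp
      exact hx (h x (Ne.symm hp))
  rw [Belief.probOn, he, μ.hasSum_one.tsum_eq]

lemma probOn_le_one (μ : Belief B) (S : Set (ℕ × B)) : μ.probOn S ≤ 1 := by
  rw [Belief.probOn, ← μ.hasSum_one.tsum_eq]
  refine Summable.tsum_le_tsum (fun x => ?_) (μ.hasSum_one.summable.indicator S) μ.hasSum_one.summable
  exact Set.indicator_le_self' (fun x _ => μ.nonneg x) x

lemma probOn_mono {μ : Belief B} {S T : Set (ℕ × B)} (hST : S ⊆ T) :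
    μ.probOn S ≤ μ.probOn T := by
  refine Summable.tsum_le_tsum (fun x => ?_) (μ.hasSum_one.summable.indicator S)
    (μ.hasSum_one.summable.indicator T)
  exact Set.indicator_le_indicator_of_subset hST (fun x => μ.nonneg x) x

lemma probOn_eq_one_of_subset {μ : Belief B} {S T : Set (ℕ × B)} (hST : S ⊆ T)
    (hS : μ.probOn S = 1) : μ.probOn T = 1 :=
  le_antisymm (probOn_le_one μ T) (hS ▸ probOn_mono hST)

/-- A point mass belief. -/
def pointMass (x : ℕ × B) : Belief B :=
  ⟨fun y => if y = x then 1 else 0, fun y => by split <;> norm_num, hasSum_ite_eq x 1⟩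

lemma expPay_levelZero (v : A → B → ℝ) (μ : Belief B) (a : A) : expPay v 0 μ a = 0 := by
  simp [expPay]

lemma isBR_levelZero (v : A → B → ℝ) (μ : Belief B) (a : A) : isBR v 0 μ a := by
  intro a'
  rw [expPay_levelZero, expPay_levelZero]

lemma exists_isBR [Nonempty A] (v : A → B → ℝ) (k : ℕ) (μ : Belief B) : ∃ a, isBR v k μ a :=
  Finite.exists_max (expPay v k μ)

variable (v1 : A → B → ℝ) (v2 : B → A → ℝ) (f : ℕ → ℝ)

lemma sigma_mono1 (n : ℕ) : (SigmaProc v1 v2 f (n + 1)).1 ⊆ (SigmaProc v1 v2 f n).1 :=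
  fun _ hx => hx.1

lemma sigma_mono2 (n : ℕ) : (SigmaProc v1 v2 f (n + 1)).2 ⊆ (SigmaProc v1 v2 f n).2 :=
  fun _ hx => hx.1

lemma br_mem1 : ∀ n : ℕ, ∀ (k : ℕ) (a : A) (μ : Belief B), memDelta f k μ →
    μ.probOn (SigmaProc v1 v2 f n).2 = 1 → isBR v1 k μ a →
    (k, a) ∈ (SigmaProc v1 v2 f (n + 1)).1 := by
  intro n
  induction n with
  | zero => exact fun k a μ hδ hp hbr => ⟨trivial, μ, hδ, hp, hbr⟩
  | succ n ih =>
      intro k a μ hδ hp hbr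
      have hp' : μ.probOn (SigmaProc v1 v2 f n).2 = 1 :=
        probOn_eq_one_of_subset (sigma_mono2 v1 v2 f n) hp
      exact ⟨ih k a μ hδ hp' hbr, μ, hδ, hp, hbr⟩

lemma br_mem2 : ∀ n : ℕ, ∀ (k : ℕ) (b : B) (μ : Belief A), memDelta f k μ →
    μ.probOn (SigmaProc v1 v2 f n).1 = 1 → isBR v2 k μ b →
    (k, b) ∈ (SigmaProc v1 v2 f (n + 1)).2 := by
  intro n
  induction n with
  | zero => exact fun k b μ hδ hp hbr => ⟨trivial, μ, hδ, hp, hbr⟩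
  | succ n ih =>
      intro k b μ hδ hp hbr
      have hp' : μ.probOn (SigmaProc v1 v2 f n).1 = 1 :=
        probOn_eq_one_of_subset (sigma_mono1 v1 v2 f n) hp
      exact ⟨ih k b μ hδ hp' hbr, μ, hδ, hp, hbr⟩

lemma memDelta_zero {μ : Belief B} : memDelta f 0 μ := fun h => absurd rfl h

lemma level0_mem [Nonempty A] [Nonempty B] :
    ∀ n : ℕ, (∀ a : A, (0, a) ∈ (SigmaProc v1 v2 f n).1) ∧
      (∀ b : B, (0, b) ∈ (SigmaProc v1 v2 f n).2) := by
  intro n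
  induction n with
  | zero => exact ⟨fun _ => trivial, fun _ => trivial⟩
  | succ n ih =>
      constructor
      · intro a
        refine br_mem1 v1 v2 f n 0 a (pointMass (0, Classical.arbitrary B))
          (memDelta_zero f) ?_ (isBR_levelZero v1 _ a)
        refine probOn_eq_one_of_support (fun x hx => ?_)
        have : x = (0, Classical.arbitrary B) := by
          by_contra hne
          exact hx (if_neg hne)
        rw [this]
        exact ih.2 _
      · intro b
        refine br_mem2 v1 v2 f n 0 b (pointMass (0, Classical.arbitrary A))
          (memDelta_zero f) ?_ (isBR_levelZero v2 _ b)
        refine probOn_eq_one_of_support (fun x hx => ?_)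
        have : x = (0, Classical.arbitrary A) := by
          by_contra hne
          exact hx (if_neg hne)
        rw [this]
        exact ih.1 _

section LevBelief

variable [Nonempty B]

lemma fnorm_nonneg (hf : ∀ n, 0 < f n) (k t : ℕ) : 0 ≤ fnorm f k t :=
  div_nonneg (hf t).le (Finset.sum_nonneg fun _ _ => (hf _).le)

lemma fnorm_pos (hf : ∀ n, 0 < f n) {k : ℕ} (hk : k ≠ 0) (t : ℕ) : 0 < fnorm f k t :=
  div_pos (hf t) (Finset.sum_pos (fun _ _ => hf _) (Finset.nonempty_range_iff.mpr hk))

/-- The probability function of the canonical level-`k` belief. -/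
def levP (k : ℕ) (g : ℕ → B) : ℕ × B → ℝ := fun x =>
  if x.1 < k then
    fnorm f k x.1 * (if x.1 = 0 then ((Fintype.card B : ℝ))⁻¹ else if x.2 = g x.1 then 1 else 0)
  else 0

lemma levP_nonneg (hf : ∀ n, 0 < f n) (k : ℕ) (g : ℕ → B) (x : ℕ × B) : 0 ≤ levP f k g x := by
  unfold levP
  split_ifs with h1 h2 h3
  · exact mul_nonneg (fnorm_nonneg f hf _ _) (by positivity)
  · exact mul_nonneg (fnorm_nonneg f hf _ _) zero_le_one
  · exact mul_nonneg (fnorm_nonneg f hf _ _) le_rfl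
  · exact le_rfl

lemma levP_row (k : ℕ) (g : ℕ → B) (t : ℕ) :
    (∑ b : B, levP f k g (t, b)) = if t < k then fnorm f k t else 0 := by
  unfold levP
  by_cases ht : t < k
  · simp only [ht, if_true]
    by_cases h0 : t = 0
    · simp only [h0, if_true]
      rw [Finset.sum_const, nsmul_eq_mul]
      have hc : (Fintype.card B : ℝ) ≠ 0 := by
        exact_mod_cast Fintype.card_ne_zero
      field_simp
      rw [Finset.card_univ]; ring
    · simp only [h0, if_false, ← Finset.mul_sum]
      rw [Finset.sum_ite_eq' Finset.univ (g t) (fun _ => (1 : ℝ))]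
      simp
  · simp [ht]

lemma levP_hasSum (hf : ∀ n, 0 < f n) {k : ℕ} (hk : k ≠ 0) (g : ℕ → B) :
    HasSum (levP f k g) 1 := by
  have hzero : ∀ x ∉ (Finset.range k ×ˢ (Finset.univ : Finset B)), levP f k g x = 0 := by
    intro x hx
    have : ¬ x.1 < k := by
      intro h
      exact hx (Finset.mem_product.mpr ⟨Finset.mem_range.mpr h, Finset.mem_univ _⟩)
    exact if_neg this
  have key : HasSum (levP f k g) _ := hasSum_sum_of_ne_finset_zero hzero
  have hsum : (∑ x ∈ Finset.range k ×ˢ (Finset.univ : Finset B), levP f k g x) = 1 := by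
    rw [Finset.sum_product]
    have : ∀ t ∈ Finset.range k, (∑ b : B, levP f k g (t, b)) = fnorm f k t := by
      intro t ht
      rw [levP_row]
      exact if_pos (Finset.mem_range.mp ht)
    rw [Finset.sum_congr rfl this]
    unfold fnorm
    rw [← Finset.sum_div, div_self]
    exact (Finset.sum_pos (fun _ _ => hf _) (Finset.nonempty_range_iff.mpr hk)).ne'
  rwa [hsum] at key

/-- The canonical level-`k` belief: marginals `fnorm f k`, uniform at level 0,
point mass at `g t` at levels `1 ≤ t < k`. -/
def levBelief (hf : ∀ n, 0 < f n) {k : ℕ} (hk : k ≠ 0) (g : ℕ → B) : Belief B :=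
  ⟨levP f k g, levP_nonneg f hf k g, levP_hasSum f hf hk g⟩

lemma levBelief_marg (hf : ∀ n, 0 < f n) {k : ℕ} (hk : k ≠ 0) (g : ℕ → B) (t : ℕ) :
    (levBelief f hf hk g).marg t = if t < k then fnorm f k t else 0 := levP_row f k g t

lemma levBelief_memDelta (hf : ∀ n, 0 < f n) {k : ℕ} (hk : k ≠ 0) (g : ℕ → B) :
    memDelta f k (levBelief f hf hk g) := by
  intro _
  refine ⟨fun t ht => ?_, fun _ b => ?_, fun t ht => ?_⟩
  · rw [levBelief_marg, if_neg (not_lt.mpr ht)]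
  · have hm : (levBelief f hf hk g).marg 0 = fnorm f k 0 := by
      rw [levBelief_marg, if_pos (Nat.pos_of_ne_zero hk)]
    have hp : (levBelief f hf hk g).p (0, b) = fnorm f k 0 * ((Fintype.card B : ℝ))⁻¹ := by
      show levP f k g (0, b) = _
      unfold levP
      simp [Nat.pos_of_ne_zero hk]
    rw [hm, hp, one_div, mul_comm, mul_div_assoc, div_self (fnorm_pos f hf hk 0).ne', mul_one]
  · rw [levBelief_marg, if_pos ht]

lemma levBelief_support (hf : ∀ n, 0 < f n) {k : ℕ} (hk : k ≠ 0) (g : ℕ → B) {x : ℕ × B}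
    (hx : (levBelief f hf hk g).p x ≠ 0) : x.1 < k ∧ (x.1 = 0 ∨ x.2 = g x.1) := by
  have hx' : levP f k g x ≠ 0 := hx
  unfold levP at hx'
  split_ifs at hx' with h1 h2 h3
  · exact ⟨h1, Or.inl h2⟩
  · exact ⟨h1, Or.inr h3⟩
  · exact absurd (mul_zero _) hx'
  · exact absurd rfl hx'

end LevBelief

end SigmaNonemptyAux

end MyAux

/-- all survivor sets of the Δ^κ-rationalization procedure are nonempty. -/
theorem sigma_sections_nonempty {A B : Type*} [Fintype A] [Fintype B] [Nonempty A] [Nonempty B]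
    (v1 : A → B → ℝ) (v2 : B → A → ℝ)
    (f : ℕ → ℝ) (hf : ∀ n, 0 < f n) (hfsum : HasSum f 1) :
    ∀ n k : ℕ, (SigmaSec1 v1 v2 f n k).Nonempty ∧ (SigmaSec2 v1 v2 f n k).Nonempty := by
  intro n
  induction n with
  | zero =>
      intro k
      exact ⟨⟨Classical.arbitrary A, trivial⟩, ⟨Classical.arbitrary B, trivial⟩⟩
  | succ n ih =>
      intro k
      match k with
      | 0 =>
          exact ⟨⟨Classical.arbitrary A, (SigmaNonemptyAux.level0_mem v1 v2 f (n + 1)).1 _⟩,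
                 ⟨Classical.arbitrary B, (SigmaNonemptyAux.level0_mem v1 v2 f (n + 1)).2 _⟩⟩
      | k + 1 =>
          constructor
          · -- player 1
            have hgs : ∀ t, ∃ b : B, (t, b) ∈ (SigmaProc v1 v2 f n).2 := fun t => (ih t).2
            choose g hg using hgs
            set μ := SigmaNonemptyAux.levBelief f hf (Nat.succ_ne_zero k) g with hμ
            have hprob : μ.probOn (SigmaProc v1 v2 f n).2 = 1 := by
              refine SigmaNonemptyAux.probOn_eq_one_of_support (fun x hx => ?_)
              obtain ⟨t, b⟩ := x
              rcases SigmaNonemptyAux.levBelief_support f hf _ g hx with ⟨-, h0 | hgx⟩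
              · simp only at h0
                subst h0
                exact (SigmaNonemptyAux.level0_mem v1 v2 f n).2 b
              · simp only at hgx
                subst hgx
                exact hg t
            obtain ⟨a, hbr⟩ := SigmaNonemptyAux.exists_isBR v1 (k + 1) μ
            exact ⟨a, SigmaNonemptyAux.br_mem1 v1 v2 f n (k + 1) a μ
              (SigmaNonemptyAux.levBelief_memDelta f hf (Nat.succ_ne_zero k) g) hprob hbr⟩
          · -- player 2
            have hgs : ∀ t, ∃ a : A, (t, a) ∈ (SigmaProc v1 v2 f n).1 := fun t => (ih t).1
            choose g hg using hgs
            set μ := SigmaNonemptyAux.levBelief f hf (Nat.succ_ne_zero k) g with hμ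
            have hprob : μ.probOn (SigmaProc v1 v2 f n).1 = 1 := by
              refine SigmaNonemptyAux.probOn_eq_one_of_support (fun x hx => ?_)
              obtain ⟨t, a⟩ := x
              rcases SigmaNonemptyAux.levBelief_support f hf _ g hx with ⟨-, h0 | hgx⟩
              · simp only at h0
                subst h0
                exact (SigmaNonemptyAux.level0_mem v1 v2 f n).1 a
              · simp only at hgx
                subst hgx
                exact hg t
            obtain ⟨b, hbr⟩ := SigmaNonemptyAux.exists_isBR v2 (k + 1) μ
            exact ⟨b, SigmaNonemptyAux.br_mem2 v1 v2 f n (k + 1) b μ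
              (SigmaNonemptyAux.levBelief_memDelta f hf (Nat.succ_ne_zero k) g) hprob hbr⟩
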